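/- A path P is realized by T_{ijk}(n) if and only if its reverse rev(P) is realized by T_{ijk}(n). -/

import Mathlib

/-- The sequence `T_ijk(n)`: element at position `a·n² + b·n + c` is `(a+1, b+1, c+1)`. -/
def Tijk (n : ℕ) : List (ℕ × ℕ × ℕ) :=
  (List.range n).flatMap fun a => (List.range n).flatMap fun b =>
    (List.range n).map fun c => (a + 1, b + 1, c + 1)

/-- The sequence `T_kij(n)`: element at position `a·n² + b·n + c` is `(b+1, c+1, a+1)`. -/
def Tkij (n : ℕ) : List (ℕ × ℕ × ℕ) :=
  (List.range n).flatMap fun a => (List.range n).flatMap fun b =>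
    (List.range n).map fun c => (b + 1, c + 1, a + 1)

/-- `T_ijk(n, i, j)`: the prefix of `T_ijk(n)` up to and including the tuple `(i, j, n)`. -/
def TijkPrefix (n i j : ℕ) : List (ℕ × ℕ × ℕ) :=
  (Tijk n).take ((i - 1) * n ^ 2 + (j - 1) * n + n)

/-- A path `P` (a list of vertices) is realized by a sequence `T` of 3-tuples:
either it has at most one edge, or some position `d` of `T` holds the tuple
`(first, last, split vertex p_x)` with both halves realized by the length-`d` prefix
(`d` here is 0-indexed, so `T.take d` is the prefix strictly before position `d`). -/
inductive Realized : List (ℕ × ℕ × ℕ) → List ℕ → Prop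
  | base (T : List (ℕ × ℕ × ℕ)) (P : List ℕ) (h : P.length ≤ 2) : Realized T P
  | step (T : List (ℕ × ℕ × ℕ)) (P : List ℕ) (d x : ℕ)
      (hd : d < T.length) (hx1 : 1 ≤ x) (hx2 : x ≤ P.length - 2)
      (ht : T.getD d default = (P.getD 0 0, P.getD (P.length - 1) 0, P.getD x 0))
      (h1 : Realized (T.take d) (P.take (x + 1)))
      (h2 : Realized (T.take d) (P.drop x)) : Realized T P

/-- A path with at least one edge, all of whose vertices lie in `[1, n]`. -/
def ValidPath (n : ℕ) (P : List ℕ) : Prop :=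
  2 ≤ P.length ∧ ∀ v ∈ P, 1 ≤ v ∧ v ≤ n

/-- Increasing path. -/
def Increasing (P : List ℕ) : Prop := P.Chain' (· < ·)

/-- Decreasing path. -/
def Decreasing (P : List ℕ) : Prop := P.Chain' (· > ·)

/-- Valley path: every interior vertex is at most the min of the endpoints. -/
def Valley (P : List ℕ) : Prop :=
  ∀ t, 1 ≤ t → t ≤ P.length - 2 →
    P.getD t 0 ≤ min (P.getD 0 0) (P.getD (P.length - 1) 0)

/-- Proper path: no two consecutive vertices `p_t, p_{t+1}` with `1 ≤ t ≤ k-2`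
both exceed the min of the endpoints. -/
def Proper (P : List ℕ) : Prop :=
  ¬ ∃ t, 1 ≤ t ∧ t ≤ P.length - 3 ∧
    min (P.getD 0 0) (P.getD (P.length - 1) 0) < P.getD t 0 ∧
    min (P.getD 0 0) (P.getD (P.length - 1) 0) < P.getD (t + 1) 0

/-- Total weight of a path: the sum of the weights of its consecutive edges. -/
def pathWeight (W : ℕ → ℕ → WithTop ℤ) (P : List ℕ) : WithTop ℤ :=
  ((P.zip P.tail).map fun q => W q.1 q.2).sum

/-- One relaxation step `A[i,j] ← min(A[i,j], A[i,k] + A[k,j])` for the tuple `(i,j,k)`. -/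
def relaxStep (A : ℕ → ℕ → WithTop ℤ) (t : ℕ × ℕ × ℕ) : ℕ → ℕ → WithTop ℤ :=
  fun i j => if i = t.1 ∧ j = t.2.1 then min (A i j) (A i t.2.2 + A t.2.2 j) else A i j

/-- Apply the relaxation steps of the sequence `T` in order, starting from `A`. -/
def relaxAll (A : ℕ → ℕ → WithTop ℤ) (T : List (ℕ × ℕ × ℕ)) : ℕ → ℕ → WithTop ℤ :=
  T.foldl relaxStep A

/-- No negative cycles on the vertex set `[1, n]`. -/
def NoNegCycle (n : ℕ) (W : ℕ → ℕ → WithTop ℤ) : Prop :=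
  ∀ P : List ℕ, 2 ≤ P.length → (∀ v ∈ P, 1 ≤ v ∧ v ≤ n) →
    P.getD 0 0 = P.getD (P.length - 1) 0 → 0 ≤ pathWeight W P

namespace Stmt5Aux


lemma length_bind_const {α : Type*} (M : ℕ → List α) (k m : ℕ) (h : ∀ b, (M b).length = k) :
    ((List.range m).flatMap M).length = m * k := by
  induction m with
  | zero => simp
  | succ m ih =>
    rw [List.range_succ, List.flatMap_append, List.length_append, ih]
    simp [h, Nat.succ_mul]

lemma getD_bind_const {α : Type*} (M : ℕ → List α) (k m b c : ℕ) (d : α)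
    (h : ∀ b, (M b).length = k) (hb : b < m) (hc : c < k) :
    ((List.range m).flatMap M).getD (b * k + c) d = (M b).getD c d := by
  induction m with
  | zero => omega
  | succ m ih =>
    rw [List.range_succ, List.flatMap_append]
    rcases lt_or_ge b m with h' | h'
    · rw [List.getD_append]
      · exact ih h'
      · rw [length_bind_const M k m h]
        calc b * k + c < b * k + k := by omega
          _ = (b + 1) * k := by ring
          _ ≤ m * k := Nat.mul_le_mul_right k (by omega)
    · have hbm : b = m := by omega
      subst hbm
      rw [List.getD_append_right _ _ _ _ (by rw [length_bind_const M k b h]; omega)]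
      rw [length_bind_const M k b h]
      simp only [List.flatMap_cons, List.flatMap_nil, List.append_nil]
      congr 1
      omega

lemma tijk_length (n : ℕ) : (Tijk n).length = n ^ 3 := by
  unfold Tijk
  rw [length_bind_const _ (n * n) n (fun a => by
    rw [length_bind_const _ n n (fun b => by simp)])]
  ring

lemma tijk_getD (n a b c : ℕ) (ha : a < n) (hb : b < n) (hc : c < n) :
    (Tijk n).getD (a * (n * n) + (b * n + c)) default = (a + 1, b + 1, c + 1) := by
  unfold Tijk
  rw [getD_bind_const _ (n * n) n a (b * n + c) _ (fun a => by
    rw [length_bind_const _ n n (fun b => by simp)]) ha (by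
      calc b * n + c < b * n + n := by omega
        _ = (b + 1) * n := by ring
        _ ≤ n * n := Nat.mul_le_mul_right n (by omega))]
  rw [getD_bind_const _ n n b c _ (fun b => by simp) hb hc]
  rw [List.getD_eq_getElem _ _ (by simpa using hc)]
  simp

/-- Decompose an index `d < n^3`. -/
lemma index_decomp (n d : ℕ) (hn : 0 < n) (hd : d < n ^ 3) :
    d / (n * n) < n ∧ d / n % n < n ∧ d % n < n ∧
      d = d / (n * n) * (n * n) + (d / n % n * n + d % n) := by
  have hnn : 0 < n * n := Nat.mul_pos hn hn
  refine ⟨?_, Nat.mod_lt _ hn, Nat.mod_lt _ hn, ?_⟩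
  · rw [Nat.div_lt_iff_lt_mul hnn]
    calc d < n ^ 3 := hd
      _ = n * (n * n) := by ring
  · have h4 : d % (n * n) / n = d / n % n := Nat.mod_mul_right_div_self d n n
    have h3 : d % (n * n) % n = d % n := Nat.mod_mod_of_dvd d ⟨n, rfl⟩
    calc d = d / (n * n) * (n * n) + d % (n * n) := (Nat.div_add_mod' d (n * n)).symm
      _ = d / (n * n) * (n * n) + (d % (n * n) / n * n + d % (n * n) % n) := by
          rw [Nat.div_add_mod' (d % (n * n)) n]
      _ = d / (n * n) * (n * n) + (d / n % n * n + d % n) := by rw [h3, h4]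

lemma tijk_getD_elim (n d u v w : ℕ) (hn : 0 < n) (hd : d < n ^ 3)
    (h : (Tijk n).getD d default = (u, v, w)) :
    1 ≤ u ∧ u ≤ n ∧ 1 ≤ v ∧ v ≤ n ∧ 1 ≤ w ∧ w ≤ n ∧
      d = (u - 1) * (n * n) + (v - 1) * n + (w - 1) := by
  obtain ⟨ha, hb, hc, hdec⟩ := index_decomp n d hn hd
  have h' : (Tijk n).getD (d / (n * n) * (n * n) + (d / n % n * n + d % n)) default
      = (d / (n * n) + 1, d / n % n + 1, d % n + 1) := tijk_getD n _ _ _ ha hb hc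
  rw [← hdec, h] at h'
  simp only [Prod.mk.injEq] at h'
  obtain ⟨e1, e2, e3⟩ := h'
  set q := d / (n * n) with hq
  set r := d / n % n with hr
  set s := d % n with hs
  clear_value q r s
  refine ⟨by omega, by omega, by omega, by omega, by omega, by omega, ?_⟩
  rw [show u - 1 = q by omega, show v - 1 = r by omega, show w - 1 = s by omega,
    Nat.add_assoc]
  exact hdec

lemma getD_take' {α : Type*} (l : List α) (m i : ℕ) (d : α) (h : i < m) :
    (l.take m).getD i d = l.getD i d := by
  rcases lt_or_ge i l.length with h' | h'
  · rw [List.getD_eq_getElem _ _ (by rw [List.length_take]; omega),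
      List.getD_eq_getElem _ _ h', List.getElem_take]
  · rw [List.getD_eq_default _ _ (by rw [List.length_take]; omega),
      List.getD_eq_default _ _ h']

lemma getD_drop' {α : Type*} (l : List α) (m i : ℕ) (d : α) (h : m + i < l.length) :
    (l.drop m).getD i d = l.getD (m + i) d := by
  rw [List.getD_eq_getElem _ _ (by rw [List.length_drop]; omega),
    List.getD_eq_getElem _ _ h, List.getElem_drop]

lemma getD_reverse' {α : Type*} (l : List α) (i : ℕ) (d : α) (h : i < l.length) :
    l.reverse.getD i d = l.getD (l.length - 1 - i) d := by
  rw [List.getD_eq_getElem _ _ (by rw [List.length_reverse]; omega),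
    List.getD_eq_getElem _ _ (by omega), List.getElem_reverse]


def rlBase (n u v : ℕ) : ℕ := (u - 1) * (n * n) + (v - 1) * n

lemma rlBase_right (n u v w : ℕ) (hw : 1 ≤ w) (hwv : w ≤ v) :
    rlBase n u v = rlBase n u w + (v - w) * n := by
  unfold rlBase
  have h : (v - 1) * n = (w - 1) * n + (v - w) * n := by
    rw [← Nat.add_mul]; congr 1; omega
  rw [h, Nat.add_assoc]

lemma rlBase_left (n u v w : ℕ) (hw : 1 ≤ w) (hwu : w ≤ u) :
    rlBase n u v = rlBase n w v + (u - w) * (n * n) := by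
  unfold rlBase
  have h : (u - 1) * (n * n) = (w - 1) * (n * n) + (u - w) * (n * n) := by
    rw [← Nat.add_mul]; congr 1; omega
  rw [h]; ring

lemma rlBase_lt (n u v w : ℕ) (hu1 : 1 ≤ u) (hu2 : u ≤ n) (hv1 : 1 ≤ v) (hv2 : v ≤ n)
    (hw1 : 1 ≤ w) (hw2 : w ≤ n) : rlBase n u v + (w - 1) < n ^ 3 := by
  have h1 : (u - 1) * (n * n) + n * n ≤ n * (n * n) := by
    calc (u - 1) * (n * n) + n * n = ((u - 1) + 1) * (n * n) := by ring
      _ = u * (n * n) := by congr 1; omega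
      _ ≤ n * (n * n) := Nat.mul_le_mul_right _ hu2
  have h2 : (v - 1) * n + n ≤ n * n := by
    calc (v - 1) * n + n = ((v - 1) + 1) * n := by ring
      _ = v * n := by congr 1; omega
      _ ≤ n * n := Nat.mul_le_mul_right _ hv2
  have h3 : n ^ 3 = n * (n * n) := by ring
  show (u - 1) * (n * n) + (v - 1) * n + (w - 1) < n ^ 3
  omega

lemma min_case_lt (k n d B1 B2 w : ℕ) (h1 : d = B1 + (w - 1)) (h2 : B1 = B2 + k)
    (hk : n ≤ k) (hw : 1 ≤ w) : min (n + 1) (d - B2 + 1) = n + 1 := by omega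

lemma min_case_eq (n d B w : ℕ) (h1 : d = B + (w - 1)) (hw : 1 ≤ w) (hwn : w ≤ n) :
    min (n + 1) (d - B + 1) = w := by omega

lemma min_case_gt (n d B1 B2 k w : ℕ) (hn : 1 ≤ n) (h1 : d = B1 + (w - 1))
    (h2 : B2 = B1 + k) (hk : w ≤ k) : min (n + 1) (d - B2 + 1) = 1 := by omega

mutual
inductive Rl (n : ℕ) : ℕ → List ℕ → Prop
  | base (c : ℕ) (P : List ℕ) (h : P.length ≤ 2) : Rl n c P
  | step (c : ℕ) (P : List ℕ) (x : ℕ) (hx1 : 1 ≤ x) (hx2 : x ≤ P.length - 2)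
      (hw : P.getD x 0 < c)
      (h1 : RlSide n (P.getD (P.length - 1) 0) (P.getD x 0) x 1 (P.take (x + 1)))
      (h2 : RlSide n (P.getD 0 0) (P.getD x 0) x (P.length - 2) (P.drop x)) : Rl n c P

inductive RlSide (n : ℕ) : ℕ → ℕ → ℕ → ℕ → List ℕ → Prop
  | lt (e w x y : ℕ) (Q : List ℕ) (h : w < e) (hr : Rl n (n + 1) Q) : RlSide n e w x y Q
  | eq (e x y : ℕ) (Q : List ℕ) (hr : Rl n e Q) : RlSide n e e x y Q
  | gt (e w x y : ℕ) (Q : List ℕ) (h : e < w) (hp : x = y) : RlSide n e w x y Q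
end

lemma side_iff (n e w x y : ℕ) (Q : List ℕ) :
    RlSide n e w x y Q ↔
      (w < e ∧ Rl n (n + 1) Q) ∨ (w = e ∧ Rl n e Q) ∨ (e < w ∧ x = y) := by
  constructor
  · intro h
    cases h with
    | lt a b c d Q' h' hr' => exact Or.inl ⟨h', hr'⟩
    | eq a c d Q' hr' => exact Or.inr (Or.inl ⟨rfl, hr'⟩)
    | gt a b c d Q' h' hp' => exact Or.inr (Or.inr ⟨h', hp'⟩)
  · rintro (⟨h, hr⟩ | ⟨h, hr⟩ | ⟨h, hp⟩)
    · exact RlSide.lt _ _ _ _ _ h hr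
    · subst h; exact RlSide.eq _ _ _ _ hr
    · exact RlSide.gt _ _ _ _ _ h hp

lemma rl_one (n : ℕ) (Q : List ℕ) (hv : ∀ v ∈ Q, 1 ≤ v) (h : Rl n 1 Q) : Q.length ≤ 2 := by
  cases h with
  | base _ _ h => exact h
  | step _ _ x hx1 hx2 hw h1 h2 =>
    exfalso
    have hx : x < Q.length := by omega
    have hm : Q.getD x 0 ∈ Q := by
      rw [List.getD_eq_getElem _ _ hx]; exact List.getElem_mem _
    have := hv _ hm; omega

lemma rl_rev (n : ℕ) : ∀ (N : ℕ) (P : List ℕ) (c : ℕ), P.length ≤ N →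
    Rl n c P → Rl n c P.reverse := by
  intro N
  induction N with
  | zero =>
    intro P c hlen _
    exact Rl.base _ _ (by rw [List.length_reverse]; omega)
  | succ N ih =>
    intro P c hlen hr
    cases hr with
    | base _ _ h => exact Rl.base _ _ (by rw [List.length_reverse]; omega)
    | step _ _ x hx1 hx2 hw h1 h2 =>
      have hk3 : 3 ≤ P.length := by omega
      have e0 : P.reverse.getD (P.length - 1) 0 = P.getD 0 0 := by
        rw [getD_reverse' P _ 0 (by omega)]; congr 1; omega
      have ex : P.reverse.getD (P.length - 1 - x) 0 = P.getD x 0 := by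
        rw [getD_reverse' P _ 0 (by omega)]; congr 1; omega
      have elast : P.reverse.getD 0 0 = P.getD (P.length - 1) 0 := by
        rw [getD_reverse' P _ 0 (by omega)]; congr 1
      have htake : P.reverse.take (P.length - 1 - x + 1) = (P.drop x).reverse := by
        rw [show P.length - 1 - x + 1 = P.length - x by omega, List.take_reverse]
        congr 1; congr 1; omega
      have hdrop : P.reverse.drop (P.length - 1 - x) = (P.take (x + 1)).reverse := by
        rw [List.drop_reverse]
        congr 1; congr 1; omega
      rw [side_iff] at h1 h2
      refine Rl.step _ _ (P.length - 1 - x) (by omega)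
        (by rw [List.length_reverse]; omega) ?_ ?_ ?_
      · rw [ex]; exact hw
      · rw [side_iff, List.length_reverse, ex, e0, htake]
        rcases h2 with ⟨hlt, hr2⟩ | ⟨heq, hr2⟩ | ⟨hgt, hxeq⟩
        · exact Or.inl ⟨hlt, ih _ _ (by rw [List.length_drop]; omega) hr2⟩
        · exact Or.inr (Or.inl ⟨heq, ih _ _ (by rw [List.length_drop]; omega) hr2⟩)
        · exact Or.inr (Or.inr ⟨hgt, by omega⟩)
      · rw [side_iff, List.length_reverse, ex, elast, hdrop]
        rcases h1 with ⟨hlt, hr1⟩ | ⟨heq, hr1⟩ | ⟨hgt, hxeq⟩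
        · exact Or.inl ⟨hlt, ih _ _ (by rw [List.length_take]; omega) hr1⟩
        · exact Or.inr (Or.inl ⟨heq, ih _ _ (by rw [List.length_take]; omega) hr1⟩)
        · exact Or.inr (Or.inr ⟨hgt, by omega⟩)




lemma getD_mem (P : List ℕ) (i : ℕ) (h : i < P.length) : P.getD i 0 ∈ P := by
  rw [List.getD_eq_getElem _ _ h]; exact List.getElem_mem _

lemma tijk_getD_intro (n u v w : ℕ) (hu1 : 1 ≤ u) (hu2 : u ≤ n) (hv1 : 1 ≤ v) (hv2 : v ≤ n)
    (hw1 : 1 ≤ w) (hw2 : w ≤ n) :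
    (Tijk n).getD (rlBase n u v + (w - 1)) default = (u, v, w) := by
  have h := tijk_getD n (u - 1) (v - 1) (w - 1) (by omega) (by omega) (by omega)
  rw [show rlBase n u v + (w - 1) = (u - 1) * (n * n) + ((v - 1) * n + (w - 1)) from
    Nat.add_assoc _ _ _]
  rw [h, show u - 1 + 1 = u by omega, show v - 1 + 1 = v by omega, show w - 1 + 1 = w by omega]

lemma bridge (n : ℕ) (hn : 0 < n) :
    ∀ (N : ℕ) (P : List ℕ), P.length ≤ N → (∀ v ∈ P, 1 ≤ v ∧ v ≤ n) → ∀ m : ℕ,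
      (Realized ((Tijk n).take m) P ↔
        Rl n (min (n + 1) (m - rlBase n (P.getD 0 0) (P.getD (P.length - 1) 0) + 1)) P) := by
  intro N
  induction N with
  | zero =>
    intro P hlen hv m
    exact ⟨fun _ => Rl.base _ _ (by omega), fun _ => Realized.base _ _ (by omega)⟩
  | succ N ih =>
    intro P hlen hv m
    constructor
    · intro h
      cases h with
      | base _ _ h => exact Rl.base _ _ h
      | step _ _ d x hd hx1 hx2 ht h1 h2 =>
        have hk3 : 3 ≤ P.length := by omega
        rw [List.length_take, tijk_length, lt_min_iff] at hd
        obtain ⟨hdm, hdn⟩ := hd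
        rw [getD_take' _ _ _ _ hdm] at ht
        obtain ⟨hu1, hu2, hv1, hv2, hw1, hw2, hdeq⟩ := tijk_getD_elim n d _ _ _ hn hdn ht
        have hd2 : d = rlBase n (P.getD 0 0) (P.getD (P.length - 1) 0) + (P.getD x 0 - 1) :=
          hdeq
        have hAlen : (P.take (x + 1)).length = x + 1 := by rw [List.length_take]; omega
        have hA0 : (P.take (x + 1)).getD 0 0 = P.getD 0 0 := getD_take' _ _ _ _ (by omega)
        have hAl : (P.take (x + 1)).getD ((P.take (x + 1)).length - 1) 0 = P.getD x 0 := by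
          rw [hAlen, Nat.add_sub_cancel]; exact getD_take' _ _ _ _ (by omega)
        have hB0 : (P.drop x).getD 0 0 = P.getD x 0 := getD_drop' _ _ _ _ (by omega)
        have hBl : (P.drop x).getD ((P.drop x).length - 1) 0 = P.getD (P.length - 1) 0 := by
          rw [List.length_drop, getD_drop' _ _ _ _ (by omega)]; congr 1; omega
        have h1' : Realized ((Tijk n).take d) (P.take (x + 1)) := by
          rwa [List.take_take, min_eq_left (le_of_lt hdm)] at h1
        have h2' : Realized ((Tijk n).take d) (P.drop x) := by
          rwa [List.take_take, min_eq_left (le_of_lt hdm)] at h2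
        have iA := ih (P.take (x + 1)) (by rw [hAlen]; omega)
          (fun y hy => hv y (List.take_subset _ _ hy)) d
        rw [hA0, hAl] at iA
        have hA' := iA.mp h1'
        have iB := ih (P.drop x) (by rw [List.length_drop]; omega)
          (fun y hy => hv y (List.drop_subset _ _ hy)) d
        rw [hB0, hBl] at iB
        have hB' := iB.mp h2'
        refine Rl.step _ _ x hx1 hx2 (by omega) ?_ ?_
        · rw [side_iff]
          rcases Nat.lt_trichotomy (P.getD x 0) (P.getD (P.length - 1) 0) with hc | hc | hc
          · refine Or.inl ⟨hc, ?_⟩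
            rwa [min_case_lt ((P.getD (P.length - 1) 0 - P.getD x 0) * n) n d _ _ _ hd2
              (rlBase_right n _ _ _ hw1 hc.le)
              (by calc n = 1 * n := (one_mul n).symm
                  _ ≤ _ := Nat.mul_le_mul_right n (by omega)) hw1] at hA'
          · refine Or.inr (Or.inl ⟨hc, ?_⟩)
            rw [hc] at hA' hd2
            rwa [min_case_eq n d _ _ hd2 hv1 hv2] at hA'
          · refine Or.inr (Or.inr ⟨hc, ?_⟩)
            rw [min_case_gt n d _ _ ((P.getD x 0 - P.getD (P.length - 1) 0) * n) _ hn hd2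
              (rlBase_right n _ _ _ hv1 hc.le)
              (by calc P.getD x 0 ≤ n := hw2
                  _ = 1 * n := (one_mul n).symm
                  _ ≤ _ := Nat.mul_le_mul_right n (by omega))] at hA'
            have := rl_one n _ (fun y hy => (hv y (List.take_subset _ _ hy)).1) hA'
            rw [hAlen] at this
            omega
        · rw [side_iff]
          rcases Nat.lt_trichotomy (P.getD x 0) (P.getD 0 0) with hc | hc | hc
          · refine Or.inl ⟨hc, ?_⟩
            rwa [min_case_lt ((P.getD 0 0 - P.getD x 0) * (n * n)) n d _ _ _ hd2
              (rlBase_left n _ _ _ hw1 hc.le)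
              (by calc n = n * 1 := (mul_one n).symm
                  _ ≤ n * n := Nat.mul_le_mul_left n hn
                  _ = 1 * (n * n) := (one_mul _).symm
                  _ ≤ _ := Nat.mul_le_mul_right (n * n) (by omega)) hw1] at hB'
          · refine Or.inr (Or.inl ⟨hc, ?_⟩)
            rw [hc] at hB' hd2
            rwa [min_case_eq n d _ _ hd2 hu1 hu2] at hB'
          · refine Or.inr (Or.inr ⟨hc, ?_⟩)
            rw [min_case_gt n d _ _ ((P.getD x 0 - P.getD 0 0) * (n * n)) _ hn hd2
              (rlBase_left n _ _ _ hu1 hc.le)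
              (by calc P.getD x 0 ≤ n := hw2
                  _ ≤ n * n := by calc n = n * 1 := (mul_one n).symm
                                    _ ≤ n * n := Nat.mul_le_mul_left n hn
                  _ = 1 * (n * n) := (one_mul _).symm
                  _ ≤ _ := Nat.mul_le_mul_right (n * n) (by omega))] at hB'
            have := rl_one n _ (fun y hy => (hv y (List.drop_subset _ _ hy)).1) hB'
            rw [List.length_drop] at this
            omega
    · intro h
      cases h with
      | base _ _ h => exact Realized.base _ _ h
      | step _ _ x hx1 hx2 hw h1 h2 =>
        have hk3 : 3 ≤ P.length := by omega
        obtain ⟨hu1, hu2⟩ := hv _ (getD_mem P 0 (by omega))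
        obtain ⟨hv1, hv2⟩ := hv _ (getD_mem P (P.length - 1) (by omega))
        obtain ⟨hw1, hw2⟩ := hv _ (getD_mem P x (by omega))
        have hdm : rlBase n (P.getD 0 0) (P.getD (P.length - 1) 0) + (P.getD x 0 - 1) < m := by
          omega
        have hdn : rlBase n (P.getD 0 0) (P.getD (P.length - 1) 0) + (P.getD x 0 - 1) < n ^ 3 :=
          rlBase_lt n _ _ _ hu1 hu2 hv1 hv2 hw1 hw2
        have hd2 : rlBase n (P.getD 0 0) (P.getD (P.length - 1) 0) + (P.getD x 0 - 1) =
            rlBase n (P.getD 0 0) (P.getD (P.length - 1) 0) + (P.getD x 0 - 1) := rfl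
        have hAlen : (P.take (x + 1)).length = x + 1 := by rw [List.length_take]; omega
        have hA0 : (P.take (x + 1)).getD 0 0 = P.getD 0 0 := getD_take' _ _ _ _ (by omega)
        have hAl : (P.take (x + 1)).getD ((P.take (x + 1)).length - 1) 0 = P.getD x 0 := by
          rw [hAlen, Nat.add_sub_cancel]; exact getD_take' _ _ _ _ (by omega)
        have hB0 : (P.drop x).getD 0 0 = P.getD x 0 := getD_drop' _ _ _ _ (by omega)
        have hBl : (P.drop x).getD ((P.drop x).length - 1) 0 = P.getD (P.length - 1) 0 := by
          rw [List.length_drop, getD_drop' _ _ _ _ (by omega)]; congr 1; omega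
        have iA := ih (P.take (x + 1)) (by rw [hAlen]; omega)
          (fun y hy => hv y (List.take_subset _ _ hy))
          (rlBase n (P.getD 0 0) (P.getD (P.length - 1) 0) + (P.getD x 0 - 1))
        rw [hA0, hAl] at iA
        have iB := ih (P.drop x) (by rw [List.length_drop]; omega)
          (fun y hy => hv y (List.drop_subset _ _ hy))
          (rlBase n (P.getD 0 0) (P.getD (P.length - 1) 0) + (P.getD x 0 - 1))
        rw [hB0, hBl] at iB
        refine Realized.step _ _
          (rlBase n (P.getD 0 0) (P.getD (P.length - 1) 0) + (P.getD x 0 - 1)) x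
          (by rw [List.length_take, tijk_length]; exact lt_min hdm hdn) hx1 hx2
          (by rw [getD_take' _ _ _ _ hdm]
              exact tijk_getD_intro n _ _ _ hu1 hu2 hv1 hv2 hw1 hw2) ?_ ?_
        · rw [List.take_take, min_eq_left (le_of_lt hdm)]
          rw [side_iff] at h1
          rcases h1 with ⟨hc, hr⟩ | ⟨hc, hr⟩ | ⟨hc, hx⟩
          · apply iA.mpr
            rw [min_case_lt ((P.getD (P.length - 1) 0 - P.getD x 0) * n) n _ _ _ _ hd2
              (rlBase_right n _ _ _ hw1 hc.le)
              (by calc n = 1 * n := (one_mul n).symm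
                  _ ≤ _ := Nat.mul_le_mul_right n (by omega)) hw1]
            exact hr
          · apply iA.mpr
            rw [hc] at hd2 ⊢
            rw [min_case_eq n _ _ _ hd2 hv1 hv2]
            exact hr
          · exact Realized.base _ _ (by rw [hAlen]; omega)
        · rw [List.take_take, min_eq_left (le_of_lt hdm)]
          rw [side_iff] at h2
          rcases h2 with ⟨hc, hr⟩ | ⟨hc, hr⟩ | ⟨hc, hx⟩
          · apply iB.mpr
            rw [min_case_lt ((P.getD 0 0 - P.getD x 0) * (n * n)) n _ _ _ _ hd2
              (rlBase_left n _ _ _ hw1 hc.le)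
              (by calc n = n * 1 := (mul_one n).symm
                  _ ≤ n * n := Nat.mul_le_mul_left n hn
                  _ = 1 * (n * n) := (one_mul _).symm
                  _ ≤ _ := Nat.mul_le_mul_right (n * n) (by omega)) hw1]
            exact hr
          · apply iB.mpr
            rw [hc] at hd2 ⊢
            rw [min_case_eq n _ _ _ hd2 hu1 hu2]
            exact hr
          · exact Realized.base _ _ (by rw [List.length_drop]; omega)



lemma min_full (n u v : ℕ) (hu1 : 1 ≤ u) (hu2 : u ≤ n) (hv1 : 1 ≤ v) (hv2 : v ≤ n) :
    min (n + 1) (n ^ 3 - rlBase n u v + 1) = n + 1 := by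
  have h := rlBase_lt n u v n hu1 hu2 hv1 hv2 (by omega) le_rfl
  omega

end Stmt5Aux

/-- A path is realized by `T_ijk(n)` iff its reverse is realized by `T_ijk(n)`. -/
theorem stmt5 (n : ℕ) (P : List ℕ) (hP : ValidPath n P) :
    Realized (Tijk n) P ↔ Realized (Tijk n) P.reverse := by
  obtain ⟨hlen, hv⟩ := hP
  have hn : 0 < n := by
    have h0 : P.getD 0 0 ∈ P := Stmt5Aux.getD_mem P 0 (by omega)
    have := hv _ h0; omega
  have hvr : ∀ v ∈ P.reverse, 1 ≤ v ∧ v ≤ n := fun v hv' => hv v (List.mem_reverse.mp hv')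
  have htake : (Tijk n).take (n ^ 3) = Tijk n :=
    List.take_of_length_le (by rw [Stmt5Aux.tijk_length])
  have hb := Stmt5Aux.bridge n hn P.length P le_rfl hv (n ^ 3)
  have hbr := Stmt5Aux.bridge n hn P.reverse.length P.reverse le_rfl hvr (n ^ 3)
  rw [htake] at hb hbr
  obtain ⟨e01, e02⟩ := hv _ (Stmt5Aux.getD_mem P 0 (by omega))
  obtain ⟨el1, el2⟩ := hv _ (Stmt5Aux.getD_mem P (P.length - 1) (by omega))
  obtain ⟨f01, f02⟩ := hvr _ (Stmt5Aux.getD_mem P.reverse 0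
    (by rw [List.length_reverse]; omega))
  obtain ⟨fl1, fl2⟩ := hvr _ (Stmt5Aux.getD_mem P.reverse (P.reverse.length - 1)
    (by rw [List.length_reverse]; omega))
  rw [Stmt5Aux.min_full n _ _ e01 e02 el1 el2] at hb
  rw [Stmt5Aux.min_full n _ _ f01 f02 fl1 fl2] at hbr
  rw [hb, hbr]
  constructor
  · exact fun h => Stmt5Aux.rl_rev n P.length P (n + 1) le_rfl h
  · intro h
    have := Stmt5Aux.rl_rev n P.reverse.length P.reverse (n + 1) le_rfl h
    rwa [List.reverse_reverse] at this
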